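/- The kernel K(t) = Σ_{q=1}^∞ (−1)^{q+1} q² exp(−π² q² t) tends to 0 as t → 0⁺; i.e., the limit of K(t) along the filter of punctured right neighborhoods of 0 is 0. -/

import Mathlib

open Real Filter Topology

noncomputable section

section KeyIdentity
open Complex


/-- Jacobi-type identity for the alternating theta function. -/
lemma key_identity {c : ℝ} (hc : 0 < c) :
    ∑' n : ℤ, ((-1:ℝ)^n * rexp (-π * c * (n:ℝ)^2)) =
    (Real.sqrt c)⁻¹ * ∑' n : ℤ, rexp (-π * ((n:ℝ) - 1/2)^2 / c) := by
  have h := Complex.tsum_exp_neg_quadratic (a := (c:ℂ)) (by simpa using hc) (I/2)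
  have hL : ∀ n : ℤ, cexp (-(π:ℂ) * c * (n:ℤ)^2 + 2 * π * (I/2) * n)
      = ((((-1:ℝ)^n * rexp (-π * c * (n:ℝ)^2)) : ℝ) : ℂ) := by
    intro n
    rw [Complex.exp_add]
    have h1 : (2 * (π:ℂ) * (I/2) * n) = n * (π * I) := by ring
    rw [h1, Complex.exp_int_mul, Complex.exp_pi_mul_I]
    push_cast [Complex.ofReal_exp]
    rw [mul_comm]
  have hR : ∀ n : ℤ, cexp (-(π:ℂ) / c * ((n:ℤ) + I * (I/2))^2)
      = ((rexp (-π * ((n:ℝ) - 1/2)^2 / c) : ℝ) : ℂ) := by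
    intro n
    have h2 : ((n:ℂ) + I * (I/2)) = ((n:ℝ) - 1/2 : ℝ) := by
      have : I * (I/2) = -(1/2 : ℂ) := by
        rw [show I * (I/2) = I*I/2 by ring, Complex.I_mul_I]; norm_num
      rw [this]; push_cast; ring
    rw [h2, Complex.ofReal_exp]
    push_cast
    ring_nf
  have hsq : ((c:ℂ) ^ (1/2 : ℂ)) = ((Real.sqrt c : ℝ) : ℂ) := by
    rw [Real.sqrt_eq_rpow, Complex.ofReal_cpow hc.le]
    push_cast; ring_nf
  simp_rw [hL, hR] at h
  rw [← Complex.ofReal_tsum, ← Complex.ofReal_tsum, hsq] at h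
  have : ((1:ℂ) / ((Real.sqrt c : ℝ) : ℂ)) = (((Real.sqrt c)⁻¹ : ℝ) : ℂ) := by
    push_cast; ring
  rw [this, ← Complex.ofReal_mul] at h
  exact_mod_cast h


end KeyIdentity


lemma sum_pow_exp {c : ℝ} (hc : 0 < c) (k : ℕ) :
    Summable (fun n : ℤ => |(n:ℝ)|^k * rexp (-π * c * (n:ℝ)^2)) := by
  have h := HurwitzKernelBounds.summable_f_int k 0 hc
  refine h.congr fun n => ?_
  simp only [HurwitzKernelBounds.f_int, add_zero]
  ring_nf

lemma sum_half_exp {c : ℝ} (hc : 0 < c) (k : ℕ) :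
    Summable (fun n : ℤ => |(n:ℝ) - 1/2|^k * rexp (-π * ((n:ℝ) - 1/2)^2 / c)) := by
  have h := HurwitzKernelBounds.summable_f_int k (-(1/2)) (one_div_pos.mpr hc)
  refine h.congr fun n => ?_
  simp only [HurwitzKernelBounds.f_int]
  rw [show (n:ℝ) + -(1/2) = (n:ℝ) - 1/2 by ring, div_eq_mul_inv, ← one_div]
  ring_nf

def Palt (c : ℝ) : ℝ := ∑' n : ℤ, (-1:ℝ)^n * rexp (-π * c * (n:ℝ)^2)

def Qth (c : ℝ) : ℝ := ∑' n : ℤ, rexp (-π * ((n:ℝ) - 1/2)^2 / c)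

lemma hasDerivAt_Palt {c : ℝ} (hc : 0 < c) :
    HasDerivAt Palt
      (∑' n : ℤ, (-1:ℝ)^n * (-π * (n:ℝ)^2) * rexp (-π * c * (n:ℝ)^2)) c := by
  apply hasDerivAt_tsum_of_isPreconnected
    (u := fun n : ℤ => π * (n:ℝ)^2 * rexp (-π * (c/2) * (n:ℝ)^2))
    (t := Set.Ioi (c/2))
    (g := fun (n : ℤ) (y : ℝ) => (-1:ℝ)^n * rexp (-π * y * (n:ℝ)^2))
    (g' := fun (n : ℤ) (y : ℝ) => (-1:ℝ)^n * (-π * (n:ℝ)^2) * rexp (-π * y * (n:ℝ)^2))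
  · refine ((sum_pow_exp (half_pos hc) 2).mul_left π).congr fun n => ?_
    rw [_root_.sq_abs]; ring
  · exact isOpen_Ioi
  · exact isPreconnected_Ioi
  · intro n y _
    have h1 : HasDerivAt (fun y : ℝ => -π * y * (n:ℝ)^2) (-π * (n:ℝ)^2) y := by
      simpa using ((hasDerivAt_id y).const_mul (-π)).mul_const ((n:ℝ)^2)
    have := (h1.exp).const_mul ((-1:ℝ)^n)
    exact this.congr_deriv (by ring)
  · intro n y hy
    have hy' : c/2 ≤ y := (Set.mem_Ioi.mp hy).le
    have h1 : ‖(-1:ℝ)^n * (-π * (n:ℝ)^2) * rexp (-π * y * (n:ℝ)^2)‖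
        = π * (n:ℝ)^2 * rexp (-π * y * (n:ℝ)^2) := by
      rw [norm_mul, norm_mul, norm_zpow, norm_neg, norm_one, one_zpow, one_mul,
        Real.norm_eq_abs, Real.norm_eq_abs, Real.abs_exp,
        show -π * (n:ℝ)^2 = -(π * (n:ℝ)^2) by ring, abs_neg,
        _root_.abs_of_nonneg (by positivity : (0:ℝ) ≤ π * (n:ℝ)^2)]
    rw [h1]
    have hconst : (0:ℝ) ≤ π * (n:ℝ)^2 := by positivity
    have h2 : -π * y * (n:ℝ)^2 ≤ -π * (c/2) * (n:ℝ)^2 := by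
      have := mul_le_mul_of_nonneg_left hy' hconst
      nlinarith
    exact mul_le_mul_of_nonneg_left (exp_le_exp.mpr h2) hconst
  · exact Set.mem_Ioi.mpr (half_lt_self hc)
  · apply Summable.of_norm
    refine (sum_pow_exp hc 0).congr fun n => ?_
    rw [pow_zero, one_mul, norm_mul, norm_zpow, norm_neg, norm_one, one_zpow, one_mul,
      Real.norm_eq_abs, Real.abs_exp]
  · exact Set.mem_Ioi.mpr (half_lt_self hc)

lemma hasDerivAt_Qth {c : ℝ} (hc : 0 < c) :
    HasDerivAt Qth
      (∑' n : ℤ, π * ((n:ℝ) - 1/2)^2 / c^2 * rexp (-π * ((n:ℝ) - 1/2)^2 / c)) c := by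
  apply hasDerivAt_tsum_of_isPreconnected
    (u := fun n : ℤ => π * ((n:ℝ) - 1/2)^2 / (c/2)^2 * rexp (-π * ((n:ℝ) - 1/2)^2 / (2*c)))
    (t := Set.Ioo (c/2) (2*c))
    (g := fun (n : ℤ) (y : ℝ) => rexp (-π * ((n:ℝ) - 1/2)^2 / y))
    (g' := fun (n : ℤ) (y : ℝ) => π * ((n:ℝ) - 1/2)^2 / y^2 * rexp (-π * ((n:ℝ) - 1/2)^2 / y))
  · refine ((sum_half_exp (c := 2*c) (by linarith) 2).mul_left (π / (c/2)^2)).congr fun n => ?_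
    rw [_root_.sq_abs]; ring
  · exact isOpen_Ioo
  · exact isPreconnected_Ioo
  · intro n y hy
    have hy0 : 0 < y := lt_trans (half_pos hc) hy.1
    have h1 : HasDerivAt (fun y : ℝ => -π * ((n:ℝ) - 1/2)^2 / y)
        (π * ((n:ℝ) - 1/2)^2 / y^2) y := by
      have := (hasDerivAt_inv (ne_of_gt hy0)).const_mul (-π * ((n:ℝ) - 1/2)^2)
      simp_rw [div_eq_mul_inv]
      exact this.congr_deriv (by ring)
    have := h1.exp
    exact this.congr_deriv (by ring)
  · intro n y hy
    have hy0 : 0 < y := lt_trans (half_pos hc) hy.1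
    have hm : (0:ℝ) ≤ ((n:ℝ) - 1/2)^2 := sq_nonneg _
    have h2 : rexp (-π * ((n:ℝ) - 1/2)^2 / y) ≤ rexp (-π * ((n:ℝ) - 1/2)^2 / (2*c)) := by
      rw [exp_le_exp]
      rw [div_le_div_iff₀ hy0 (by linarith : (0:ℝ) < 2*c)]
      nlinarith [mul_le_mul_of_nonneg_left hy.2.le (mul_nonneg pi_pos.le hm)]
    have h3 : π * ((n:ℝ) - 1/2)^2 / y^2 ≤ π * ((n:ℝ) - 1/2)^2 / (c/2)^2 := by
      apply div_le_div_of_nonneg_left (by positivity) (by positivity)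
      nlinarith [hy.1, half_pos hc]
    rw [Real.norm_eq_abs, _root_.abs_of_nonneg (by positivity)]
    exact mul_le_mul h3 h2 (exp_pos _).le (by positivity)
  · exact Set.mem_Ioo.mpr ⟨half_lt_self hc, by linarith⟩
  · refine Summable.of_norm ((sum_half_exp hc 0).congr fun n => ?_)
    rw [pow_zero, one_mul, Real.norm_eq_abs, Real.abs_exp]
  · exact Set.mem_Ioo.mpr ⟨half_lt_self hc, by linarith⟩



lemma exp_neg_le {x : ℝ} (hx : 0 < x) (k : ℕ) :
    rexp (-x) ≤ (k.factorial : ℝ) / x ^ k := by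
  have h := Real.pow_div_factorial_le_exp (x := x) hx.le k
  rw [Real.exp_neg, inv_le_iff_one_le_mul₀ (exp_pos _)]
  rw [div_mul_eq_mul_div, le_div_iff₀ (by positivity : (0:ℝ) < x^k), one_mul]
  rw [div_le_iff₀ (by positivity : (0:ℝ) < (k.factorial:ℝ))] at h
  nlinarith [h]

lemma term_bound1 {c m : ℝ} (hc0 : 0 < c) (hc1 : c ≤ 1) (hm : 1/4 ≤ m^2) :
    1/(2*c*Real.sqrt c) * rexp (-π * m^2 / c) ≤ c * 100 * rexp (-π * m^2 / 2) := by
  set s := Real.sqrt c with hs_def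
  have hs2 : s^2 = c := Real.sq_sqrt hc0.le
  have hs0 : 0 < s := Real.sqrt_pos.mpr hc0
  have hs1 : s ≤ 1 := by rw [hs_def, show (1:ℝ) = Real.sqrt 1 by simp]; exact Real.sqrt_le_sqrt hc1
  have hcs : c ≤ s := by nlinarith
  have hx0 : 0 < π * m^2 / (2*c) := by positivity
  have hsplit : rexp (-π * m^2 / c) = rexp (-(π * m^2 / (2*c))) * rexp (-(π * m^2 / (2*c))) := by
    rw [← Real.exp_add]; congr 1; field_simp; ring
  have h1 : rexp (-(π * m^2 / (2*c))) ≤ 6 / (π * m^2 / (2*c))^3 := by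
    simpa [Nat.factorial] using exp_neg_le hx0 3
  have h2 : rexp (-(π * m^2 / (2*c))) ≤ rexp (-(π * m^2 / 2)) := by
    rw [exp_le_exp, neg_le_neg_iff]
    exact div_le_div_of_nonneg_left (by positivity) (by positivity) (by linarith)
  have hX : (27:ℝ)/64 ≤ (π * m^2)^3 := by
    have hpm : (3:ℝ)/4 ≤ π * m^2 := by nlinarith [pi_gt_three]
    calc (27:ℝ)/64 = (3/4)^3 := by norm_num
      _ ≤ (π * m^2)^3 := pow_le_pow_left₀ (by norm_num) hpm 3
  have hprod : rexp (-π * m^2 / c) ≤ (6 / (π * m^2 / (2*c))^3) * rexp (-(π * m^2 / 2)) := by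
    rw [hsplit]
    exact mul_le_mul h1 h2 (exp_pos _).le (by positivity)
  have hm0 : 0 < m^2 := by linarith
  have hcoef : 1/(2*c*s) * (6 / (π * m^2 / (2*c))^3) ≤ c * 100 := by
    have hrw : 1/(2*c*s) * (6 / (π * m^2 / (2*c))^3) = 24 * c^2 / (s * (π * m^2)^3) := by
      field_simp
      ring
    rw [hrw, div_le_iff₀ (by positivity)]
    nlinarith [mul_le_mul_of_nonneg_left hX (by positivity : (0:ℝ) ≤ 100 * c * s),
      mul_le_mul_of_nonneg_left hcs (by positivity : (0:ℝ) ≤ (675:ℝ)/16 * c)]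
  calc 1/(2*c*s) * rexp (-π * m^2 / c)
      ≤ 1/(2*c*s) * ((6 / (π * m^2 / (2*c))^3) * rexp (-(π * m^2 / 2))) :=
        mul_le_mul_of_nonneg_left hprod (by positivity)
    _ = (1/(2*c*s) * (6 / (π * m^2 / (2*c))^3)) * rexp (-(π * m^2 / 2)) := by ring
    _ ≤ (c * 100) * rexp (-(π * m^2 / 2)) :=
        mul_le_mul_of_nonneg_right hcoef (exp_pos _).le
    _ = c * 100 * rexp (-π * m^2 / 2) := by ring_nf

lemma term_bound2 {c m : ℝ} (hc0 : 0 < c) (hc1 : c ≤ 1) (hm : 1/4 ≤ m^2) :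
    (Real.sqrt c)⁻¹ * (π * m^2 / c^2 * rexp (-π * m^2 / c)) ≤ c * 1000 * rexp (-π * m^2 / 2) := by
  set s := Real.sqrt c with hs_def
  have hs2 : s^2 = c := Real.sq_sqrt hc0.le
  have hs0 : 0 < s := Real.sqrt_pos.mpr hc0
  have hs1 : s ≤ 1 := by rw [hs_def, show (1:ℝ) = Real.sqrt 1 by simp]; exact Real.sqrt_le_sqrt hc1
  have hcs : c ≤ s := by nlinarith
  have hx0 : 0 < π * m^2 / (2*c) := by positivity
  have hsplit : rexp (-π * m^2 / c) = rexp (-(π * m^2 / (2*c))) * rexp (-(π * m^2 / (2*c))) := by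
    rw [← Real.exp_add]; congr 1; field_simp; ring
  have h1 : rexp (-(π * m^2 / (2*c))) ≤ 24 / (π * m^2 / (2*c))^4 := by
    simpa [Nat.factorial] using exp_neg_le hx0 4
  have h2 : rexp (-(π * m^2 / (2*c))) ≤ rexp (-(π * m^2 / 2)) := by
    rw [exp_le_exp, neg_le_neg_iff]
    exact div_le_div_of_nonneg_left (by positivity) (by positivity) (by linarith)
  have hX : (27:ℝ)/64 ≤ (π * m^2)^3 := by
    have hpm : (3:ℝ)/4 ≤ π * m^2 := by nlinarith [pi_gt_three]
    calc (27:ℝ)/64 = (3/4)^3 := by norm_num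
      _ ≤ (π * m^2)^3 := pow_le_pow_left₀ (by norm_num) hpm 3
  have hprod : rexp (-π * m^2 / c) ≤ (24 / (π * m^2 / (2*c))^4) * rexp (-(π * m^2 / 2)) := by
    rw [hsplit]
    exact mul_le_mul h1 h2 (exp_pos _).le (by positivity)
  have hm0 : 0 < m^2 := by linarith
  have hcoef : s⁻¹ * (π * m^2 / c^2) * (24 / (π * m^2 / (2*c))^4) ≤ c * 1000 := by
    have hrw : s⁻¹ * (π * m^2 / c^2) * (24 / (π * m^2 / (2*c))^4)
        = 384 * c^2 / (s * (π * m^2)^3) := by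
      have hπm : π * m^2 ≠ 0 := by positivity
      field_simp
      ring
    rw [hrw, div_le_iff₀ (by positivity)]
    nlinarith [mul_le_mul_of_nonneg_left hX (by positivity : (0:ℝ) ≤ 1000 * c * s),
      mul_le_mul_of_nonneg_left hcs (by positivity : (0:ℝ) ≤ (3375:ℝ)/8 * c)]
  calc s⁻¹ * (π * m^2 / c^2 * rexp (-π * m^2 / c))
      ≤ s⁻¹ * (π * m^2 / c^2 * ((24 / (π * m^2 / (2*c))^4) * rexp (-(π * m^2 / 2)))) := by
        apply mul_le_mul_of_nonneg_left _ (by positivity)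
        exact mul_le_mul_of_nonneg_left hprod (by positivity)
    _ = (s⁻¹ * (π * m^2 / c^2) * (24 / (π * m^2 / (2*c))^4)) * rexp (-(π * m^2 / 2)) := by ring
    _ ≤ (c * 1000) * rexp (-(π * m^2 / 2)) := mul_le_mul_of_nonneg_right hcoef (exp_pos _).le
    _ = c * 1000 * rexp (-π * m^2 / 2) := by ring_nf




def Qder (c : ℝ) : ℝ := -(1/(2*Real.sqrt c))/(Real.sqrt c)^2 * Qth c
  + (Real.sqrt c)⁻¹ * ∑' n : ℤ, π * ((n:ℝ) - 1/2)^2 / c^2 * rexp (-π * ((n:ℝ) - 1/2)^2 / c)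

lemma hasDerivAt_Q {c : ℝ} (hc : 0 < c) :
    HasDerivAt (fun y => (Real.sqrt y)⁻¹ * Qth y) (Qder c) c := by
  have h1 : HasDerivAt (fun y => (Real.sqrt y)⁻¹) (-(1/(2*Real.sqrt c))/(Real.sqrt c)^2) c :=
    (Real.hasDerivAt_sqrt hc.ne').inv (Real.sqrt_ne_zero'.mpr hc)
  exact h1.mul (hasDerivAt_Qth hc)

lemma mhalf (n : ℤ) : (1:ℝ)/4 ≤ ((n:ℝ) - 1/2)^2 := by
  rcases le_or_gt n 0 with h|h
  · have h' : (n:ℝ) ≤ 0 := by exact_mod_cast h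
    nlinarith
  · have h' : (1:ℝ) ≤ (n:ℝ) := by exact_mod_cast h
    nlinarith

lemma Qth_def (c : ℝ) : Qth c = ∑' n : ℤ, rexp (-π * ((n:ℝ) - 1/2)^2 / c) := rfl





lemma sum_half_exp0 {c : ℝ} (hc : 0 < c) :
    Summable (fun n : ℤ => rexp (-π * ((n:ℝ) - 1/2)^2 / c)) := by
  simpa using sum_half_exp hc 0

lemma Qder_bound {c : ℝ} (hc : c ∈ Set.Ioc (0:ℝ) 1) :
    ‖Qder c‖ ≤ c * (1100 * ∑' n : ℤ, rexp (-π * ((n:ℝ) - 1/2)^2 / 2)) := by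
  obtain ⟨hc0, hc1⟩ := hc
  set s := Real.sqrt c with hs_def
  have hs2 : s^2 = c := Real.sq_sqrt hc0.le
  have hs0 : 0 < s := Real.sqrt_pos.mpr hc0
  set Θ : ℝ := ∑' n : ℤ, rexp (-π * ((n:ℝ) - 1/2)^2 / 2) with hΘ
  have hsum2 : Summable (fun n : ℤ => c * 100 * rexp (-π * ((n:ℝ) - 1/2)^2 / 2)) :=
    (sum_half_exp0 two_pos).mul_left _
  have hsum2' : Summable (fun n : ℤ => c * 1000 * rexp (-π * ((n:ℝ) - 1/2)^2 / 2)) :=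
    (sum_half_exp0 two_pos).mul_left _
  -- part A
  have hQthnn : 0 ≤ Qth c := by
    rw [Qth_def]; exact tsum_nonneg (fun n => (exp_pos _).le)
  have hcoefA : -(1/(2*s))/s^2 = -(1/(2*c*s)) := by
    rw [← hs2]; field_simp
  have hA : ‖-(1/(2*s))/s^2 * Qth c‖ = 1/(2*c*s) * Qth c := by
    rw [hcoefA, norm_mul, norm_neg, Real.norm_eq_abs, Real.norm_eq_abs,
      _root_.abs_of_nonneg hQthnn, _root_.abs_of_nonneg (by positivity : (0:ℝ) ≤ 1/(2*c*s))]
  have hAle : 1/(2*c*s) * Qth c ≤ c * 100 * Θ := by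
    rw [Qth_def, ← tsum_mul_left, hΘ, ← tsum_mul_left]
    apply Summable.tsum_le_tsum _ ((sum_half_exp0 hc0).mul_left _) hsum2
    exact fun n => term_bound1 hc0 hc1 (mhalf n)
  -- part B
  have hsumB : Summable (fun n : ℤ => s⁻¹ * (π * ((n:ℝ) - 1/2)^2 / c^2 *
      rexp (-π * ((n:ℝ) - 1/2)^2 / c))) := by
    refine ((sum_half_exp hc0 2).mul_left (s⁻¹ * π / c^2)).congr fun n => ?_
    rw [_root_.sq_abs]; ring
  have hBnn : (0:ℝ) ≤ ∑' n : ℤ, π * ((n:ℝ) - 1/2)^2 / c^2 * rexp (-π * ((n:ℝ) - 1/2)^2 / c) :=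
    tsum_nonneg (fun n => by positivity)
  have hB : ‖(s⁻¹ : ℝ) * ∑' n : ℤ, π * ((n:ℝ) - 1/2)^2 / c^2 * rexp (-π * ((n:ℝ) - 1/2)^2 / c)‖
      = s⁻¹ * ∑' n : ℤ, π * ((n:ℝ) - 1/2)^2 / c^2 * rexp (-π * ((n:ℝ) - 1/2)^2 / c) := by
    rw [norm_mul, Real.norm_eq_abs, Real.norm_eq_abs, _root_.abs_of_nonneg hBnn,
      _root_.abs_of_nonneg (by positivity : (0:ℝ) ≤ s⁻¹)]
  have hBle : s⁻¹ * (∑' n : ℤ, π * ((n:ℝ) - 1/2)^2 / c^2 * rexp (-π * ((n:ℝ) - 1/2)^2 / c))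
      ≤ c * 1000 * Θ := by
    rw [← tsum_mul_left, hΘ, ← tsum_mul_left]
    apply Summable.tsum_le_tsum _ hsumB hsum2'
    exact fun n => term_bound2 hc0 hc1 (mhalf n)
  calc ‖Qder c‖ ≤ ‖-(1/(2*s))/s^2 * Qth c‖
        + ‖(s⁻¹ : ℝ) * ∑' n : ℤ, π * ((n:ℝ) - 1/2)^2 / c^2 * rexp (-π * ((n:ℝ) - 1/2)^2 / c)‖ :=
      norm_add_le _ _
    _ ≤ c * 100 * Θ + c * 1000 * Θ := by rw [hA, hB]; exact add_le_add hAle hBle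
    _ = c * (1100 * Θ) := by ring

lemma tendsto_Qder : Tendsto Qder (𝓝[>] (0:ℝ)) (𝓝 0) := by
  apply squeeze_zero_norm'
  · filter_upwards [Ioc_mem_nhdsGT_of_mem (Set.mem_Ico.mpr ⟨le_refl (0:ℝ), zero_lt_one⟩)] with c hc
    exact Qder_bound hc
  · have : Tendsto (fun c : ℝ => c * (1100 * ∑' n : ℤ, rexp (-π * ((n:ℝ) - 1/2)^2 / 2)))
        (𝓝[>] (0:ℝ)) (𝓝 (0 * (1100 * ∑' n : ℤ, rexp (-π * ((n:ℝ) - 1/2)^2 / 2)))) :=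
      (tendsto_id.mono_left nhdsWithin_le_nhds).mul_const _
    simpa using this



lemma summable_kernel {t : ℝ} (ht : 0 < t) :
    Summable (fun q : ℕ+ =>
      (-1 : ℝ) ^ ((q : ℕ) + 1) * (q : ℝ) ^ 2 * Real.exp (-(π ^ 2) * (q : ℝ) ^ 2 * t)) := by
  have base : Summable (fun n : ℕ => (n:ℝ)^2 * rexp (-(π^2*t) * n)) :=
    summable_pow_mul_exp_neg_nat_mul 2 (by positivity)
  have base' : Summable (fun q : ℕ+ => ((q:ℕ):ℝ)^2 * rexp (-(π^2*t) * (q:ℕ))) :=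
    base.comp_injective PNat.coe_injective
  apply Summable.of_norm
  apply base'.of_norm_bounded
  intro q
  have hq1 : (1:ℝ) ≤ ((q:ℕ):ℝ) := by exact_mod_cast q.one_le
  have hqsq : ((q:ℕ):ℝ) ≤ ((q:ℕ):ℝ)^2 := by nlinarith
  simp only [norm_norm, norm_mul, Real.norm_eq_abs, Real.abs_exp, abs_pow, abs_neg, abs_one,
    one_pow, one_mul, _root_.sq_abs]
  have hle : rexp (-(π^2) * ((q:ℕ):ℝ)^2 * t) ≤ rexp (-(π^2*t) * (q:ℕ)) := by
    rw [exp_le_exp]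
    nlinarith [mul_le_mul_of_nonneg_left hqsq (by positivity : (0:ℝ) ≤ π^2 * t)]
  calc ((q:ℕ):ℝ)^2 * rexp (-(π^2) * ((q:ℕ):ℝ)^2 * t)
      ≤ ((q:ℕ):ℝ)^2 * rexp (-(π^2*t) * (q:ℕ)) :=
        mul_le_mul_of_nonneg_left hle (by positivity)

lemma Fneg (c : ℝ) (m : ℤ) :
    (-1:ℝ)^(-m) * (-π * ((-m:ℤ):ℝ)^2) * rexp (-π * c * ((-m:ℤ):ℝ)^2)
    = (-1:ℝ)^m * (-π * (m:ℝ)^2) * rexp (-π * c * (m:ℝ)^2) := by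
  have h1 : ((-1:ℝ))^(-m) = (-1:ℝ)^m := by
    rw [zpow_neg, ← inv_zpow]
    norm_num
  have h2 : ((-m:ℤ):ℝ)^2 = (m:ℝ)^2 := by push_cast; ring
  rw [h1, h2]

lemma kernel_eq {t : ℝ} (ht : 0 < t) :
    (∑' q : ℕ+, (-1 : ℝ) ^ ((q : ℕ) + 1) * (q : ℝ) ^ 2 * Real.exp (-(π ^ 2) * (q : ℝ) ^ 2 * t))
    = (∑' n : ℤ, (-1:ℝ)^n * (-π * (n:ℝ)^2) * rexp (-π * (π*t) * (n:ℝ)^2)) / (2*π) := by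
  set c : ℝ := π * t with hc_def
  set k : ℕ+ → ℝ := fun q =>
    (-1 : ℝ) ^ ((q : ℕ) + 1) * (q : ℝ) ^ 2 * Real.exp (-(π ^ 2) * (q : ℝ) ^ 2 * t) with hk_def
  set F : ℤ → ℝ := fun n => (-1:ℝ)^n * (-π * (n:ℝ)^2) * rexp (-π * c * (n:ℝ)^2) with hF_def
  have hKs : HasSum k (∑' q, k q) := (summable_kernel ht).hasSum
  have key : ∀ n : ℕ, F ((n:ℤ)+1) = π * k ((Equiv.pnatEquivNat.symm) n) := by
    intro n
    have hcoe : (((Equiv.pnatEquivNat.symm) n : ℕ+) : ℕ) = n + 1 := by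
      simp [Equiv.pnatEquivNat, Nat.succPNat]
    rw [hk_def]
    simp only [hcoe]
    rw [hF_def]
    have hz : ((-1:ℝ))^((n:ℤ)+1) = (-1:ℝ)^(n+1) := by
      rw [show ((n:ℤ)+1) = ((n+1:ℕ):ℤ) by push_cast; ring, zpow_natCast]
    have hexp : rexp (-π * c * (((n:ℤ)+1:ℤ):ℝ)^2) = rexp (-(π^2) * ((n+1:ℕ):ℝ)^2 * t) := by
      rw [hc_def]; congr 1; push_cast; ring
    push_cast
    rw [show ((-1:ℝ))^((n:ℤ)+1) = (-1:ℝ)^(n+1) from hz, hc_def]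
    rw [pow_succ, pow_succ]
    ring_nf
  have h1 : HasSum (fun n : ℕ => F ((n:ℤ)+1)) (π * ∑' q, k q) := by
    have he := (Equiv.pnatEquivNat.symm.hasSum_iff (f := k)).mpr hKs
    have h2 := he.mul_left π
    exact (funext key : (fun n : ℕ => F ((n:ℤ)+1)) = _) ▸ h2
  have h2 : HasSum (fun n : ℕ => F (-((n:ℤ)+1))) (π * ∑' q, k q) := by
    have heq : (fun n : ℕ => F (-((n:ℤ)+1))) = (fun n : ℕ => F ((n:ℤ)+1)) := by
      funext n
      rw [hF_def]
      exact Fneg c ((n:ℤ)+1)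
    rw [heq]; exact h1
  have hF0 : F 0 = 0 := by rw [hF_def]; simp
  have hsum : HasSum F (π * (∑' q, k q) + F 0 + π * ∑' q, k q) :=
    HasSum.of_add_one_of_neg_add_one h1 h2
  have htsum : (∑' n : ℤ, F n) = 2 * π * ∑' q, k q := by
    rw [hsum.tsum_eq, hF0]; ring
  rw [htsum]
  field_simp




lemma sum_deriv_eq {c : ℝ} (hc : 0 < c) :
    (∑' n : ℤ, (-1:ℝ)^n * (-π * (n:ℝ)^2) * rexp (-π * c * (n:ℝ)^2)) = Qder c := by
  have hQ : HasDerivAt Palt (Qder c) c := by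
    apply (hasDerivAt_Q hc).congr_of_eventuallyEq
    filter_upwards [isOpen_Ioi.mem_nhds (Set.mem_Ioi.mpr hc)] with y hy
    rw [Palt, key_identity hy, Qth_def]
  exact (hasDerivAt_Palt hc).unique hQ

/-- The kernel `K(t) = ∑_{q=1}^∞ (-1)^{q+1} q² exp(-π² q² t)` tends to `0` as
`t → 0⁺`, i.e. along the filter of punctured right neighborhoods of `0`. -/
theorem kernel_tendsto_zero :
    Tendsto
      (fun t : ℝ => ∑' q : ℕ+,
        (-1 : ℝ) ^ ((q : ℕ) + 1) * (q : ℝ) ^ 2 * Real.exp (-(π ^ 2) * (q : ℝ) ^ 2 * t))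
      (𝓝[>] (0 : ℝ)) (𝓝 0) := by
  have hmap : Tendsto (fun t : ℝ => π * t) (𝓝[>] (0:ℝ)) (𝓝[>] (0:ℝ)) := by
    apply tendsto_nhdsWithin_of_tendsto_nhds_of_eventually_within
    · have h0 : Tendsto (fun t : ℝ => π * t) (𝓝 0) (𝓝 (π * 0)) :=
        (continuous_const.mul continuous_id).tendsto 0
      rw [mul_zero] at h0
      exact h0.mono_left nhdsWithin_le_nhds
    · filter_upwards [self_mem_nhdsWithin] with t ht
      exact mul_pos pi_pos ht
  have hS : Tendsto (fun c : ℝ => ∑' n : ℤ, (-1:ℝ)^n * (-π * (n:ℝ)^2) * rexp (-π * c * (n:ℝ)^2))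
      (𝓝[>] (0:ℝ)) (𝓝 0) := by
    apply tendsto_Qder.congr'
    filter_upwards [self_mem_nhdsWithin] with c hc
    exact (sum_deriv_eq hc).symm
  have hcomp := (hS.comp hmap).div_const (2*π)
  rw [zero_div] at hcomp
  apply hcomp.congr'
  filter_upwards [self_mem_nhdsWithin] with t ht
  exact (kernel_eq ht).symm

end
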